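/- Let d ∈ (0, 1/2) and define the differenced fractional kernel f̃_d(s) = ( s_+^d − 2(s−1)_+^d + (s−2)_+^d )/Γ(d+1). Then there exist constants C, C' > 0 such that |f̃_d(t)| ≤ C min(1, |t|^{d−2}) for all t ∈ ℝ, and ∫_ℝ |f̃_d(t) f̃_d(t+k)| dt ≤ C' min(1, |k|^{d−1}) for all k ∈ ℤ; consequently Σ_{k∈ℤ} ( ∫_ℝ |f̃_d(t) f̃_d(t+k)| dt )² < ∞. -/

import Mathlib

open MeasureTheory Real
open scoped ENNReal

/-- The differenced fractional kernel
`f̃_d(s) = (s₊^d − 2(s−1)₊^d + (s−2)₊^d)/Γ(d+1)`. -/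
noncomputable def diffFracKernel (d : ℝ) (s : ℝ) : ℝ :=
  (max s 0 ^ d - 2 * max (s - 1) 0 ^ d + max (s - 2) 0 ^ d) / Real.Gamma (d + 1)

namespace St16Aux

open Set Filter

noncomputable def g (d : ℝ) (t : ℝ) : ℝ := min 1 (|t| ^ (d - 2))

lemma g_nonneg (d t : ℝ) : 0 ≤ g d t :=
  le_min zero_le_one (Real.rpow_nonneg (abs_nonneg t) _)

lemma g_le_one (d t : ℝ) : g d t ≤ 1 := min_le_left _ _

lemma g_le_rpow {d t a : ℝ} (ha : 0 < a) (h : a ≤ |t|) (hd : d ≤ 2) :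
    g d t ≤ a ^ (d - 2) :=
  (min_le_right _ _).trans (Real.rpow_le_rpow_of_nonpos ha h (by linarith))

lemma g_meas (d : ℝ) : Measurable (g d) := by unfold g; fun_prop

lemma g_integrable {d : ℝ} (hd0 : 0 < d) (hd2 : d < 1/2) : Integrable (g d) := by
  have hloc : LocallyIntegrable (g d) volume := by
    rw [locallyIntegrable_iff]
    intro K hK
    refine Integrable.mono' (integrableOn_const (C := (1:ℝ)) hK.measure_lt_top.ne) ?_ ?_
    · exact (g_meas d).aestronglyMeasurable.restrict
    · exact Filter.Eventually.of_forall fun x => by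
        rw [Real.norm_eq_abs, abs_of_nonneg (g_nonneg d x)]; exact g_le_one d x
  refine hloc.integrable_of_isBigO_atTop_of_norm_isNegInvariant
    (g := fun x : ℝ => x ^ (d - 2)) ?_ ?_ ?_
  · exact Filter.Eventually.of_forall fun x => by simp [Function.comp, g, abs_neg]
  · rw [Asymptotics.isBigO_iff]
    refine ⟨1, ?_⟩
    filter_upwards [Filter.eventually_ge_atTop (1:ℝ)] with x hx
    rw [one_mul, Real.norm_eq_abs, abs_of_nonneg (g_nonneg d x)]
    refine le_trans ?_ (le_abs_self _)
    exact g_le_rpow (by linarith) (by rw [abs_of_nonneg (by linarith)]) (by linarith)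
  · exact ⟨Set.Ioi 1, Filter.Ioi_mem_atTop 1,
      integrableOn_Ioi_rpow_of_lt (by linarith) one_pos⟩

lemma second_diff {d : ℝ} (hd0 : 0 < d) (hd1 : d < 1) {t : ℝ} (ht : 3 ≤ t) :
    |t ^ d - 2 * (t-1) ^ d + (t-2) ^ d| ≤ 9 * t ^ (d - 2) := by
  have hrpow_cont : Continuous fun x : ℝ => x ^ d :=
    continuous_iff_continuousAt.2 fun x => Real.continuousAt_rpow_const x d (Or.inr hd0.le)
  set φ : ℝ → ℝ := fun s => s ^ d - (s - 1) ^ d with hφdef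
  have hφcont : Continuous φ :=
    hrpow_cont.sub (hrpow_cont.comp (continuous_id.sub continuous_const))
  have hφ : ∀ s : ℝ, 1 < s → HasDerivAt φ (d * s ^ (d-1) - d * (s-1) ^ (d-1)) s := by
    intro s hs
    have h1 : HasDerivAt (fun x : ℝ => x ^ d) (d * s ^ (d-1)) s :=
      Real.hasDerivAt_rpow_const (Or.inl (by positivity : s ≠ 0))
    have h2 : HasDerivAt (fun x : ℝ => (x - 1) ^ d) (d * (s-1) ^ (d-1)) s := by
      have h3 : HasDerivAt (fun x : ℝ => x ^ d) (d * (s-1) ^ (d-1)) (s-1) :=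
        Real.hasDerivAt_rpow_const (Or.inl (by intro h; rw [sub_eq_zero] at h; linarith))
      exact HasDerivAt.comp_sub_const s 1 h3
    exact h1.sub h2
  obtain ⟨c, hc, hceq⟩ := exists_deriv_eq_slope φ (show t - 1 < t by linarith)
    hφcont.continuousOn
    (fun s hs => ((hφ s (by simp only [mem_Ioo] at hs; linarith)).differentiableAt.differentiableWithinAt))
  obtain ⟨hc1, hc2⟩ := hc
  have hc1' : 2 < c := by linarith
  have hnum : φ t - φ (t-1) = d * c ^ (d-1) - d * (c-1) ^ (d-1) := by
    have := (hφ c (by linarith)).deriv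
    rw [this] at hceq
    rw [show t - (t-1) = 1 by ring, div_one] at hceq
    linarith
  set ψ : ℝ → ℝ := fun u => u ^ (d-1) with hψdef
  have hψ : ∀ u : ℝ, 0 < u → HasDerivAt ψ ((d-1) * u ^ (d-2)) u := by
    intro u hu
    have := Real.hasDerivAt_rpow_const (x := u) (p := d-1) (Or.inl hu.ne')
    simpa [show d - 1 - 1 = d - 2 by ring] using this
  obtain ⟨e, he, heeq⟩ := exists_deriv_eq_slope ψ (show c - 1 < c by linarith)
    (fun u hu => ((hψ u (by simp only [mem_Icc] at hu; linarith)).continuousAt.continuousWithinAt))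
    (fun u hu => ((hψ u (by simp only [mem_Ioo] at hu; linarith)).differentiableAt.differentiableWithinAt))
  obtain ⟨he1, he2⟩ := he
  have hinner : c ^ (d-1) - (c-1) ^ (d-1) = (d-1) * e ^ (d-2) := by
    have := (hψ e (by linarith)).deriv
    rw [this] at heeq
    rw [show c - (c-1) = 1 by ring, div_one] at heeq
    exact heeq.symm
  have htot : t ^ d - 2 * (t-1) ^ d + (t-2) ^ d = d * ((d-1) * e ^ (d-2)) := by
    have h0 : φ t - φ (t-1) = t ^ d - 2 * (t-1) ^ d + (t-2) ^ d := by
      simp only [hφdef]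
      rw [show t - 1 - 1 = t - 2 by ring]
      ring
    rw [← h0, hnum, ← hinner]
    ring
  rw [htot]
  have hepos : (0:ℝ) < t - 2 := by linarith
  have he' : t - 2 ≤ e := by linarith
  have hrpos : (0:ℝ) ≤ e ^ (d-2) := Real.rpow_nonneg (by linarith) _
  have habs : |d * ((d-1) * e ^ (d-2))| = d * ((1-d) * e ^ (d-2)) := by
    rw [abs_mul, abs_mul, abs_of_pos hd0, abs_of_neg (by linarith : d - 1 < 0),
      abs_of_nonneg hrpos]
    ring_nf
  rw [habs]
  have step1 : d * ((1-d) * e ^ (d-2)) ≤ e ^ (d-2) := by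
    have hd' : d * (1-d) ≤ 1 := by nlinarith
    nlinarith [mul_le_mul_of_nonneg_right hd' hrpos]
  have step2 : e ^ (d-2) ≤ (t-2) ^ (d-2) :=
    Real.rpow_le_rpow_of_nonpos hepos he' (by linarith)
  have step3 : (t-2) ^ (d-2) ≤ (t/3) ^ (d-2) :=
    Real.rpow_le_rpow_of_nonpos (by linarith) (by linarith) (by linarith)
  have step4 : (t/3) ^ (d-2) ≤ 9 * t ^ (d-2) := by
    have h3 : (t/3 : ℝ) = t * (3:ℝ)⁻¹ := by ring
    rw [h3, Real.mul_rpow (by linarith) (by norm_num),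
      Real.inv_rpow (by norm_num), ← Real.rpow_neg (by norm_num)]
    rw [mul_comm (9:ℝ)]
    apply mul_le_mul_of_nonneg_left _ (Real.rpow_nonneg (by linarith) _)
    calc (3:ℝ) ^ (-(d-2)) ≤ (3:ℝ) ^ (2:ℝ) :=
          Real.rpow_le_rpow_of_exponent_le (by norm_num) (by linarith)
      _ = 9 := by
          rw [show (2:ℝ) = ((2:ℕ):ℝ) by norm_num, Real.rpow_natCast]; norm_num
  linarith

lemma kernel_bound {d : ℝ} (hd0 : 0 < d) (hd2 : d < 1/2) (t : ℝ) :
    |diffFracKernel d t| ≤ (108 / Real.Gamma (d+1)) * g d t := by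
  have hG : 0 < Real.Gamma (d+1) := Real.Gamma_pos_of_pos (by linarith)
  rcases le_or_gt t 0 with ht | ht
  · have h0 : diffFracKernel d t = 0 := by
      unfold diffFracKernel
      rw [max_eq_right ht, max_eq_right (by linarith : t - 1 ≤ 0),
        max_eq_right (by linarith : t - 2 ≤ 0), Real.zero_rpow hd0.ne']
      ring
    rw [h0, abs_zero]
    exact mul_nonneg (by positivity) (g_nonneg d t)
  · have habs : |diffFracKernel d t|
        = |max t 0 ^ d - 2 * max (t - 1) 0 ^ d + max (t - 2) 0 ^ d| / Real.Gamma (d+1) := by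
      unfold diffFracKernel
      rw [abs_div, abs_of_pos hG]
    rcases le_or_gt t 3 with ht3 | ht3
    · have hb : ∀ x : ℝ, x ≤ 3 → max x 0 ^ d ≤ 3 := by
        intro x hx
        calc max x 0 ^ d ≤ (3:ℝ) ^ d :=
              Real.rpow_le_rpow (le_max_right x 0) (max_le hx (by norm_num)) hd0.le
          _ ≤ (3:ℝ) ^ (1:ℝ) :=
              Real.rpow_le_rpow_of_exponent_le (by norm_num) (by linarith)
          _ = 3 := Real.rpow_one 3
      have hnn : ∀ x : ℝ, (0:ℝ) ≤ max x 0 ^ d := fun x =>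
        Real.rpow_nonneg (le_max_right x 0) d
      have hnum : |max t 0 ^ d - 2 * max (t - 1) 0 ^ d + max (t - 2) 0 ^ d| ≤ 12 := by
        have h1 := hb t ht3; have h2 := hb (t-1) (by linarith); have h3 := hb (t-2) (by linarith)
        have n1 := hnn t; have n2 := hnn (t-1); have n3 := hnn (t-2)
        rw [abs_le]; constructor <;> nlinarith
      have hgge : (1:ℝ)/9 ≤ g d t := by
        refine le_min (by norm_num) ?_
        have h9 : (1:ℝ)/9 = (3:ℝ) ^ (-2:ℝ) := by
          rw [show (-2:ℝ) = ((-2:ℤ):ℝ) by norm_num, Real.rpow_intCast]; norm_num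
        rw [h9]
        calc (3:ℝ) ^ (-2:ℝ) ≤ (3:ℝ) ^ (d - 2) :=
              Real.rpow_le_rpow_of_exponent_le (by norm_num) (by linarith)
          _ ≤ |t| ^ (d - 2) :=
              Real.rpow_le_rpow_of_nonpos (abs_pos.2 ht.ne')
                (by rw [abs_of_pos ht]; exact ht3) (by linarith)
      calc |diffFracKernel d t| = _ := habs
        _ ≤ 12 / Real.Gamma (d+1) := div_le_div_of_nonneg_right hnum hG.le
        _ = (108 / Real.Gamma (d+1)) * (1/9) := by ring
        _ ≤ (108 / Real.Gamma (d+1)) * g d t :=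
            mul_le_mul_of_nonneg_left hgge (by positivity)
    · have hm1 : max t 0 = t := max_eq_left (by linarith)
      have hm2 : max (t-1) 0 = t - 1 := max_eq_left (by linarith)
      have hm3 : max (t-2) 0 = t - 2 := max_eq_left (by linarith)
      have hgeq : g d t = t ^ (d - 2) := by
        unfold g
        rw [abs_of_pos ht]
        exact min_eq_right (Real.rpow_le_one_of_one_le_of_nonpos (by linarith) (by linarith))
      rw [habs, hm1, hm2, hm3, hgeq]
      calc |t ^ d - 2 * (t-1) ^ d + (t-2) ^ d| / Real.Gamma (d+1)
          ≤ (9 * t ^ (d-2)) / Real.Gamma (d+1) :=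
            div_le_div_of_nonneg_right (second_diff hd0 (by linarith) ht3.le) hG.le
        _ ≤ (108 / Real.Gamma (d+1)) * t ^ (d - 2) := by
            rw [div_mul_eq_mul_div, mul_comm]
            apply div_le_div_of_nonneg_right ?_ hG.le
            have : (0:ℝ) ≤ t ^ (d-2) := Real.rpow_nonneg (by linarith) _
            nlinarith

lemma kernel_continuous {d : ℝ} (hd0 : 0 < d) : Continuous (diffFracKernel d) := by
  have hc : Continuous fun x : ℝ => x ^ d :=
    continuous_iff_continuousAt.2 fun x => Real.continuousAt_rpow_const x d (Or.inr hd0.le)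
  unfold diffFracKernel
  apply Continuous.div_const
  exact ((hc.comp (continuous_id.max continuous_const)).sub
    (continuous_const.mul (hc.comp ((continuous_id.sub continuous_const).max continuous_const)))).add
    (hc.comp ((continuous_id.sub continuous_const).max continuous_const))

lemma g_prod_bound {d k : ℝ} (hd2 : d < 2) (hk : 1 ≤ k) (t : ℝ) :
    g d t * g d (t + k) ≤ (k/2) ^ (d-2) * (g d t + g d (t + k)) := by
  have hk2 : (0:ℝ) < k/2 := by linarith
  by_cases h : k/2 ≤ |t|
  · have h1 : g d t ≤ (k/2) ^ (d-2) := g_le_rpow hk2 h (by linarith)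
    calc g d t * g d (t+k) ≤ (k/2)^(d-2) * g d (t+k) :=
          mul_le_mul_of_nonneg_right h1 (g_nonneg _ _)
      _ ≤ _ := mul_le_mul_of_nonneg_left (le_add_of_nonneg_left (g_nonneg _ _))
          (Real.rpow_nonneg hk2.le _)
  · push_neg at h
    have habs : k/2 ≤ |t + k| := by
      have h1 : |k| ≤ |t + k| + |t| := by
        calc |k| = |(t + k) + (-t)| := by rw [show t + k + -t = k by ring]
          _ ≤ |t + k| + |(-t)| := abs_add_le _ _
          _ = |t + k| + |t| := by rw [abs_neg]
      rw [abs_of_pos (by linarith : (0:ℝ) < k)] at h1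
      linarith
    have h1 : g d (t+k) ≤ (k/2) ^ (d-2) := g_le_rpow hk2 habs (by linarith)
    calc g d t * g d (t+k) ≤ g d t * (k/2)^(d-2) :=
          mul_le_mul_of_nonneg_left h1 (g_nonneg _ _)
      _ = (k/2)^(d-2) * g d t := mul_comm _ _
      _ ≤ _ := mul_le_mul_of_nonneg_left (le_add_of_nonneg_right (g_nonneg _ _))
          (Real.rpow_nonneg hk2.le _)

lemma prod_le {d : ℝ} (hd0 : 0 < d) (hd2 : d < 1/2) (a t : ℝ) :
    |diffFracKernel d t * diffFracKernel d (t + a)|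
      ≤ (108 / Real.Gamma (d+1))^2 * (g d t * g d (t + a)) := by
  rw [abs_mul]
  calc |diffFracKernel d t| * |diffFracKernel d (t + a)|
      ≤ ((108 / Real.Gamma (d+1)) * g d t) * ((108 / Real.Gamma (d+1)) * g d (t+a)) := by
        have hG : 0 < Real.Gamma (d+1) := Real.Gamma_pos_of_pos (by linarith)
        exact mul_le_mul (kernel_bound hd0 hd2 t) (kernel_bound hd0 hd2 (t+a))
          (abs_nonneg _) (mul_nonneg (by positivity) (g_nonneg _ _))
    _ = (108 / Real.Gamma (d+1))^2 * (g d t * g d (t + a)) := by ring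

lemma prod_integrable {d : ℝ} (hd0 : 0 < d) (hd2 : d < 1/2) (a : ℝ) :
    Integrable (fun t => |diffFracKernel d t * diffFracKernel d (t + a)|) := by
  have hgi := g_integrable hd0 hd2
  refine Integrable.mono' (hgi.const_mul ((108 / Real.Gamma (d+1))^2)) ?_ ?_
  · exact (((kernel_continuous hd0).mul
      ((kernel_continuous hd0).comp (continuous_id.add continuous_const))).abs).aestronglyMeasurable
  · refine Filter.Eventually.of_forall fun t => ?_
    rw [Real.norm_eq_abs, abs_abs]
    calc |diffFracKernel d t * diffFracKernel d (t + a)|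
        ≤ (108 / Real.Gamma (d+1))^2 * (g d t * g d (t + a)) := prod_le hd0 hd2 a t
      _ ≤ (108 / Real.Gamma (d+1))^2 * (g d t * 1) :=
          mul_le_mul_of_nonneg_left
            (mul_le_mul_of_nonneg_left (g_le_one _ _) (g_nonneg _ _)) (by positivity)
      _ = (108 / Real.Gamma (d+1))^2 * g d t := by ring

lemma shift_symm {d : ℝ} (a : ℝ) :
    (∫ t : ℝ, |diffFracKernel d t * diffFracKernel d (t + a)|)
      = ∫ t : ℝ, |diffFracKernel d t * diffFracKernel d (t + (-a))| := by
  calc (∫ t : ℝ, |diffFracKernel d t * diffFracKernel d (t + a)|)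
      = ∫ t : ℝ, |diffFracKernel d (t + -a) * diffFracKernel d ((t + -a) + a)| :=
        (integral_add_right_eq_self (fun t => |diffFracKernel d t * diffFracKernel d (t + a)|) (-a)).symm
    _ = ∫ t : ℝ, |diffFracKernel d t * diffFracKernel d (t + (-a))| := by
        congr 1; funext t
        rw [show t + -a + a = t by ring, mul_comm]

lemma integral_le {d : ℝ} (hd0 : 0 < d) (hd2 : d < 1/2) {a : ℝ} (ha : 1 ≤ a) :
    (∫ t : ℝ, |diffFracKernel d t * diffFracKernel d (t + a)|)
      ≤ (2 * (108 / Real.Gamma (d+1))^2 * (∫ t : ℝ, g d t)) * (a/2) ^ (d-2) := by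
  set C0 := 108 / Real.Gamma (d+1) with hC0def
  have hG : 0 < Real.Gamma (d+1) := Real.Gamma_pos_of_pos (by linarith)
  have hC0 : 0 < C0 := by positivity
  have hgi := g_integrable hd0 hd2
  have h1 : Integrable (fun t => g d (t + a)) := hgi.comp_add_right a
  have hrhs : Integrable (fun t => C0^2 * (a/2)^(d-2) * (g d t + g d (t + a))) :=
    (hgi.add h1).const_mul _
  have hptwise : ∀ t : ℝ, |diffFracKernel d t * diffFracKernel d (t + a)|
      ≤ C0^2 * (a/2)^(d-2) * (g d t + g d (t + a)) := by
    intro t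
    calc |diffFracKernel d t * diffFracKernel d (t + a)|
        ≤ C0^2 * (g d t * g d (t + a)) := prod_le hd0 hd2 a t
      _ ≤ C0^2 * ((a/2)^(d-2) * (g d t + g d (t + a))) :=
          mul_le_mul_of_nonneg_left (g_prod_bound (by linarith) ha t) (by positivity)
      _ = C0^2 * (a/2)^(d-2) * (g d t + g d (t + a)) := by ring
  calc (∫ t : ℝ, |diffFracKernel d t * diffFracKernel d (t + a)|)
      ≤ ∫ t : ℝ, C0^2 * (a/2)^(d-2) * (g d t + g d (t + a)) :=
        integral_mono (prod_integrable hd0 hd2 a) hrhs hptwise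
    _ = C0^2 * (a/2)^(d-2) * ((∫ t : ℝ, g d t) + ∫ t : ℝ, g d (t + a)) := by
        rw [integral_const_mul, integral_add hgi h1]
    _ = C0^2 * (a/2)^(d-2) * ((∫ t : ℝ, g d t) + ∫ t : ℝ, g d t) := by
        rw [integral_add_right_eq_self (g d) a]
    _ = (2 * C0^2 * (∫ t : ℝ, g d t)) * (a/2) ^ (d-2) := by ring

end St16Aux

/-- for `d ∈ (0,1/2)` there are constants `C, C' > 0` with
`|f̃_d(t)| ≤ C min(1, |t|^{d−2})` for all `t`, and
`∫ |f̃_d(t) f̃_d(t+k)| dt ≤ C' min(1, |k|^{d−1})` for all `k ∈ ℤ`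
(for `k = 0` the bound reads `C'`); consequently
`∑_{k∈ℤ} (∫ |f̃_d(t) f̃_d(t+k)| dt)² < ∞`. -/
theorem statement16 (d : ℝ) (hd : d ∈ Set.Ioo (0 : ℝ) (1 / 2)) :
    (∃ C : ℝ, 0 < C ∧ ∀ t : ℝ,
        |diffFracKernel d t| ≤ C * min 1 (|t| ^ (d - 2)))
    ∧ (∃ C' : ℝ, 0 < C' ∧ ∀ k : ℤ,
        (∫ t : ℝ, |diffFracKernel d t * diffFracKernel d (t + (k : ℝ))|)
          ≤ C' * min 1 (if k = 0 then 1 else |(k : ℝ)| ^ (d - 1)))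
    ∧ Summable (fun k : ℤ =>
        (∫ t : ℝ, |diffFracKernel d t * diffFracKernel d (t + (k : ℝ))|) ^ 2) := by
  obtain ⟨hd0, hd2⟩ := hd
  have hG : 0 < Real.Gamma (d+1) := Real.Gamma_pos_of_pos (by linarith)
  set C0 : ℝ := 108 / Real.Gamma (d+1) with hC0def
  have hC0 : 0 < C0 := by positivity
  set I : ℝ := ∫ t : ℝ, St16Aux.g d t with hIdef
  have hI : 0 ≤ I := integral_nonneg (fun t => St16Aux.g_nonneg d t)
  have h2d : (1:ℝ) ≤ (2:ℝ) ^ (2 - d) := by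
    have := Real.rpow_le_rpow_of_exponent_le (by norm_num : (1:ℝ) ≤ 2)
      (by linarith : (0:ℝ) ≤ 2 - d)
    rwa [Real.rpow_zero] at this
  set C' : ℝ := 2 ^ (2-d) * 2 * C0^2 * (I + 1) with hC'def
  have hC' : 0 < C' := by positivity
  have key : ∀ a : ℝ, 1 ≤ a →
      (∫ t : ℝ, |diffFracKernel d t * diffFracKernel d (t + a)|) ≤ C' * a ^ (d-1) := by
    intro a ha
    have h1 := St16Aux.integral_le hd0 hd2 ha
    have hsplit : (a/2 : ℝ) ^ (d-2) ≤ 2 ^ (2-d) * a ^ (d-1) := by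
      have e1 : (a/2 : ℝ) ^ (d-2) = a ^ (d-2) * 2 ^ (2-d) := by
        rw [show (a/2 : ℝ) = a * (2:ℝ)⁻¹ by ring,
          Real.mul_rpow (by linarith) (by norm_num),
          Real.inv_rpow (by norm_num), ← Real.rpow_neg (by norm_num),
          show -(d-2) = 2 - d by ring]
      rw [e1]
      have e2 : a ^ (d-2) ≤ a ^ (d-1) :=
        Real.rpow_le_rpow_of_exponent_le ha (by linarith)
      calc a ^ (d-2) * 2 ^ (2-d) ≤ a ^ (d-1) * 2 ^ (2-d) :=
            mul_le_mul_of_nonneg_right e2 (by positivity)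
        _ = 2 ^ (2-d) * a ^ (d-1) := mul_comm _ _
    calc (∫ t : ℝ, |diffFracKernel d t * diffFracKernel d (t + a)|)
        ≤ (2 * C0^2 * I) * (a/2) ^ (d-2) := h1
      _ ≤ (2 * C0^2 * (I+1)) * (2 ^ (2-d) * a ^ (d-1)) := by
          apply mul_le_mul (by nlinarith) hsplit (Real.rpow_nonneg (by linarith) _)
            (by positivity)
      _ = C' * a ^ (d-1) := by ring
  have hbound : ∀ k : ℤ, (∫ t : ℝ, |diffFracKernel d t * diffFracKernel d (t + (k:ℝ))|)
      ≤ C' * min 1 (if k = 0 then 1 else |(k:ℝ)| ^ (d-1)) := by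
    intro k
    rcases lt_trichotomy k 0 with hk | hk | hk
    · have hkle : k ≤ -1 := by omega
      have hk1 : (1:ℝ) ≤ -(k:ℝ) := by
        have : (k:ℝ) ≤ -1 := by exact_mod_cast hkle
        linarith
      rw [St16Aux.shift_symm (d := d) ((k:ℝ))]
      have h := key (-(k:ℝ)) hk1
      have habs : |(k:ℝ)| = -(k:ℝ) := abs_of_neg (by exact_mod_cast hk)
      rw [if_neg hk.ne, min_eq_right (Real.rpow_le_one_of_one_le_of_nonpos
        (by rw [habs]; linarith) (by linarith)), habs]
      exact h
    · subst hk
      have hc0 : ((0:ℤ):ℝ) = 0 := by norm_num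
      rw [if_pos rfl, min_self, mul_one, hc0]
      have hgi := St16Aux.g_integrable hd0 hd2
      have hintle : (∫ t : ℝ, |diffFracKernel d t * diffFracKernel d (t + 0)|)
          ≤ C0^2 * I := by
        calc (∫ t : ℝ, |diffFracKernel d t * diffFracKernel d (t + 0)|)
            ≤ ∫ t : ℝ, C0^2 * St16Aux.g d t := by
              refine integral_mono (St16Aux.prod_integrable hd0 hd2 0)
                (hgi.const_mul _) (fun t => ?_)
              calc |diffFracKernel d t * diffFracKernel d (t + 0)|
                  ≤ C0^2 * (St16Aux.g d t * St16Aux.g d (t + 0)) :=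
                    St16Aux.prod_le hd0 hd2 0 t
                _ ≤ C0^2 * (St16Aux.g d t * 1) :=
                    mul_le_mul_of_nonneg_left
                      (mul_le_mul_of_nonneg_left (St16Aux.g_le_one _ _)
                        (St16Aux.g_nonneg _ _)) (by positivity)
                _ = C0^2 * St16Aux.g d t := by ring
          _ = C0^2 * I := integral_const_mul _ _
      refine hintle.trans ?_
      rw [hC'def]
      nlinarith [sq_nonneg C0, mul_nonneg (sq_nonneg C0) hI, mul_pos hC0 hC0]
    · have hk1 : (1:ℝ) ≤ (k:ℝ) := by
        have : (1:ℤ) ≤ k := hk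
        exact_mod_cast this
      have h := key ((k:ℝ)) hk1
      have habs : |(k:ℝ)| = (k:ℝ) := abs_of_pos (by exact_mod_cast hk)
      rw [if_neg hk.ne', min_eq_right (Real.rpow_le_one_of_one_le_of_nonpos
        (by rw [habs]; linarith) (by linarith)), habs]
      exact h
  refine ⟨⟨C0, hC0, fun t => by
      simpa [St16Aux.g] using St16Aux.kernel_bound hd0 hd2 t⟩,
    ⟨C', hC', hbound⟩, ?_⟩
  set F : ℤ → ℝ := fun k => ∫ t : ℝ, |diffFracKernel d t * diffFracKernel d (t + (k:ℝ))|
    with hFdef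
  have hFnn : ∀ k, 0 ≤ F k := fun k => integral_nonneg (fun t => abs_nonneg _)
  have hw : Summable (fun k : ℤ =>
      C'^2 * (|(k:ℝ)| ^ ((d-1)*2)) + (if k = 0 then C'^2 else 0)) := by
    apply Summable.add
    · apply Summable.mul_left
      have hs := Real.summable_abs_int_rpow (show (1:ℝ) < 2 - 2*d by linarith)
      simp only [show -(2-2*d) = (d-1)*2 by ring] at hs
      exact hs
    · exact summable_of_ne_finset_zero (s := {0}) (fun k hk => by
        simp only [Finset.mem_singleton] at hk; simp [hk])
  refine Summable.of_nonneg_of_le (fun k => sq_nonneg _) (fun k => ?_) hw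
  by_cases hk : k = 0
  · subst hk
    have h0 : |((0:ℤ):ℝ)| ^ ((d-1)*2) = 0 := by
      rw [show ((0:ℤ):ℝ) = 0 by norm_num, abs_zero]
      exact Real.zero_rpow (by nlinarith)
    rw [if_pos rfl, h0, mul_zero, zero_add]
    have hF0 : F 0 ≤ C' := by
      have := hbound 0
      rwa [if_pos rfl, min_self, mul_one] at this
    calc F 0 ^ 2 ≤ C' ^ 2 := pow_le_pow_left₀ (hFnn 0) hF0 2
      _ = C' ^ 2 := rfl
  · rw [if_neg hk, add_zero]
    have hFk : F k ≤ C' * |(k:ℝ)| ^ (d-1) := by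
      refine (hbound k).trans ?_
      rw [if_neg hk]
      exact mul_le_mul_of_nonneg_left (min_le_right _ _) hC'.le
    have hrpow : (|(k:ℝ)| ^ (d-1))^2 = |(k:ℝ)| ^ ((d-1)*2) := by
      rw [← Real.rpow_natCast (|(k:ℝ)| ^ (d-1)) 2, ← Real.rpow_mul (abs_nonneg _)]
      norm_num
    calc F k ^ 2 ≤ (C' * |(k:ℝ)| ^ (d-1))^2 :=
          pow_le_pow_left₀ (hFnn k) hFk 2
      _ = C'^2 * (|(k:ℝ)| ^ ((d-1)*2)) := by rw [mul_pow, hrpow]
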